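/- arXiv:1803.04346 — 2 statements merged into one kernel-verified Lean document; each statement's English description precedes it below -/
import Mathlib

section
/- The source term discretization s_i = p_i·(exp((φ(x_i) - φ(x_i + Δx))/(2θ_i)) - exp((φ(x_i) - φ(x_i - Δx))/(2θ_i)))/Δx satisfies s_i = -(p_i/θ_i)·φ'(x_i) + O(Δx²) as Δx → 0, for φ three times continuously differentiable and θ_i > 0. -/
open Set

/-- On a set with unique differentiability, the iterated derivative within the set of a
globally `C^m` function agrees with the global iterated derivative. -/
lemma iteratedDerivWithin_eq_iteratedDeriv_of_contDiff {m : ℕ} {f : ℝ → ℝ}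
    (hf : ContDiff ℝ (m : ℕ∞) f) {s : Set ℝ} (hs : UniqueDiffOn ℝ s) {x : ℝ} (hx : x ∈ s) :
    iteratedDerivWithin m f s x = iteratedDeriv m f x := by
  have h := (contDiff_iff_ftaylorSeries.mp hf).hasFTaylorSeriesUpToOn s
  have h2 := h.eq_iteratedFDerivWithin_of_uniqueDiffOn
    (m := m) (by exact_mod_cast le_rfl) hs hx
  rw [iteratedDerivWithin_eq_iteratedFDerivWithin, iteratedDeriv_eq_iteratedFDeriv, ← h2]
  rfl

/-- The well-balanced source term discretization is a second order accurate
approximation of `-(pᵢ/θᵢ) φ'(xᵢ)`. -/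
theorem source_term_second_order
    (φ : ℝ → ℝ) (xi pi θi : ℝ) (hθ : 0 < θi)
    (hφ : ContDiff ℝ 3 φ) :
    ∃ C > 0, ∃ δ > 0, ∀ Δx : ℝ, 0 < Δx → Δx < δ →
      |pi * (Real.exp ((φ xi - φ (xi + Δx)) / (2 * θi)) -
             Real.exp ((φ xi - φ (xi - Δx)) / (2 * θi))) / Δx
        + pi / θi * deriv φ xi| ≤ C * Δx ^ 2 := by
  set g : ℝ → ℝ := fun h => Real.exp ((φ xi - φ (xi + h)) / (2 * θi)) with hgdef
  set E : ℝ → ℝ := fun h => g h - g (-h) with hEdef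
  have hg : ContDiff ℝ 3 g :=
    Real.contDiff_exp.comp
      ((contDiff_const.sub (hφ.comp (contDiff_const.add contDiff_id))).div_const _)
  have hE : ContDiff ℝ 3 E := hg.sub (hg.comp contDiff_neg)
  have hθ' : (2 : ℝ) * θi ≠ 0 := by positivity
  have hφd : Differentiable ℝ φ := hφ.differentiable (by norm_num)
  have hgd : HasDerivAt g (-(deriv φ xi) / (2 * θi)) 0 := by
    have h1 : HasDerivAt (fun h : ℝ => xi + h) 1 0 := (hasDerivAt_id 0).const_add xi
    have h2 : HasDerivAt (fun h : ℝ => φ (xi + h)) (deriv φ (xi + 0) * 1) 0 :=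
      ((hφd (xi + 0)).hasDerivAt).comp 0 h1
    have h3 : HasDerivAt (fun h : ℝ => (φ xi - φ (xi + h)) / (2 * θi))
        ((0 - deriv φ (xi + 0) * 1) / (2 * θi)) 0 :=
      ((hasDerivAt_const 0 (φ xi)).sub h2).div_const _
    have h4 := h3.exp
    simpa using h4
  have hgderiv : deriv g 0 = -(deriv φ xi) / (2 * θi) := hgd.deriv
  have hEpi : E = g - fun x => g (-x) := rfl
  have hsub : ∀ n : ℕ, (n : WithTop ℕ∞) ≤ 3 → ∀ a : ℝ,
      iteratedDeriv n E a = iteratedDeriv n g a - iteratedDeriv n (fun x => g (-x)) a := by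
    intro n hn a
    rw [hEpi]
    have := iteratedDerivWithin_sub (Set.mem_univ a) uniqueDiffOn_univ
      (f := g) (g := fun x => g (-x))
      (hg.of_le hn).contDiffWithinAt ((hg.comp contDiff_neg).of_le hn).contDiffWithinAt
    simpa [iteratedDerivWithin_univ] using this
  have hE1 : deriv E 0 = 2 * deriv g 0 := by
    have h := hsub 1 (by norm_num) 0
    rw [iteratedDeriv_comp_neg, neg_zero] at h
    simp only [iteratedDeriv_one, pow_one, neg_one_smul] at h
    rw [h]; ring
  have hE2 : iteratedDeriv 2 E 0 = 0 := by
    have h := hsub 2 (by norm_num) 0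
    rw [iteratedDeriv_comp_neg, neg_zero] at h
    simp only [neg_one_sq, one_smul] at h
    rw [h]; ring
  have hE0 : E 0 = 0 := by simp [hEdef]
  have hcont : Continuous (iteratedDeriv 3 E) := hE.continuous_iteratedDeriv 3 le_rfl
  obtain ⟨M, hM⟩ := (isCompact_Icc (a := (0:ℝ)) (b := 1)).exists_bound_of_continuousOn
    hcont.continuousOn
  set M' : ℝ := max M 0 with hM'def
  have hM0 : 0 ≤ M' := le_max_right _ _
  refine ⟨|pi| * M' / 6 + 1, by positivity, 1, one_pos, ?_⟩
  intro Δx hΔ hΔ1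
  have hΔne : Δx ≠ 0 := ne_of_gt hΔ
  set s : Set ℝ := Icc (0:ℝ) Δx with hsdef
  have hsu : UniqueDiffOn ℝ s := uniqueDiffOn_Icc hΔ
  have hfO : ContDiffOn ℝ 2 E s := (hE.of_le (by norm_num)).contDiffOn
  have heq2 : ∀ y ∈ s, iteratedDerivWithin 2 E s y = iteratedDeriv 2 E y := fun y hy =>
    iteratedDerivWithin_eq_iteratedDeriv_of_contDiff
      (by exact_mod_cast hE.of_le (by norm_num)) hsu hy
  have heq3 : ∀ y ∈ s, iteratedDerivWithin 3 E s y = iteratedDeriv 3 E y := fun y hy =>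
    iteratedDerivWithin_eq_iteratedDeriv_of_contDiff
      (by exact_mod_cast hE) hsu hy
  have hdiff2 : DifferentiableOn ℝ (iteratedDerivWithin 2 E s) (Ioo 0 Δx) := by
    refine ((hE.differentiable_iteratedDeriv 2 (by norm_num)).differentiableOn).congr ?_
    exact fun y hy => heq2 y (Ioo_subset_Icc_self hy)
  obtain ⟨c, hc, hTay⟩ := taylor_mean_remainder_lagrange (n := 2) (x₀ := 0) (x := Δx) hΔ.ne
    (by rw [uIcc_of_le hΔ.le]; exact hfO) (by rw [uIcc_of_le hΔ.le, uIoo_of_le hΔ.le]; exact hdiff2)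
  rw [uIoo_of_le hΔ.le] at hc
  rw [uIcc_of_le hΔ.le] at hTay
  have hT : taylorWithinEval E 2 s 0 Δx = deriv E 0 * Δx := by
    rw [taylor_within_apply]
    have h0 : iteratedDerivWithin 0 E s 0 = 0 := by simpa using hE0
    have h1 : iteratedDerivWithin 1 E s 0 = deriv E 0 := by
      rw [iteratedDerivWithin_eq_iteratedDeriv_of_contDiff
        (by exact_mod_cast hE.of_le (by norm_num)) hsu (left_mem_Icc.mpr hΔ.le)]
      rw [iteratedDeriv_one]
    have h2 : iteratedDerivWithin 2 E s 0 = 0 := by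
      rw [heq2 0 (left_mem_Icc.mpr hΔ.le)]; exact hE2
    rw [Finset.sum_range_succ, Finset.sum_range_succ, Finset.sum_range_succ,
      Finset.sum_range_zero, h0, h1, h2]
    simp
    ring
  have hcM : |iteratedDerivWithin 3 E s c| ≤ M' := by
    rw [heq3 c (Ioo_subset_Icc_self hc)]
    have hc1 : c ∈ Icc (0:ℝ) 1 := ⟨hc.1.le, le_trans hc.2.le hΔ1.le⟩
    exact le_trans (hM _ hc1) (le_max_left _ _)
  have hrem : |E Δx - deriv E 0 * Δx| ≤ M' * Δx ^ 3 / 6 := by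
    rw [← hT, hTay]
    have hfact : iteratedDerivWithin 3 E s c * (Δx - 0) ^ (2 + 1) / (Nat.factorial (2 + 1) : ℕ) =
        iteratedDerivWithin 3 E s c * Δx ^ 3 / 6 := by
      norm_num [Nat.factorial]
    rw [hfact, abs_div, abs_mul, abs_pow, abs_of_pos hΔ]
    rw [show |(6:ℝ)| = 6 by norm_num]
    gcongr
  have hderivE : deriv E 0 = -(deriv φ xi) / θi := by
    rw [hE1, hgderiv]; field_simp
  have hexpr : pi * (Real.exp ((φ xi - φ (xi + Δx)) / (2 * θi)) -
             Real.exp ((φ xi - φ (xi - Δx)) / (2 * θi))) / Δx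
        + pi / θi * deriv φ xi = pi * (E Δx - deriv E 0 * Δx) / Δx := by
    have hEval : E Δx = Real.exp ((φ xi - φ (xi + Δx)) / (2 * θi)) -
        Real.exp ((φ xi - φ (xi - Δx)) / (2 * θi)) := by
      simp [hEdef, hgdef, sub_eq_add_neg]
    rw [hEval, hderivE]
    field_simp
    ring
  rw [hexpr, abs_div, abs_mul, abs_of_pos hΔ, div_le_iff₀ hΔ]
  calc |pi| * |E Δx - deriv E 0 * Δx| ≤ |pi| * (M' * Δx ^ 3 / 6) :=
        mul_le_mul_of_nonneg_left hrem (abs_nonneg _)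
    _ = |pi| * M' / 6 * Δx ^ 2 * Δx := by ring
    _ ≤ (|pi| * M' / 6 + 1) * Δx ^ 2 * Δx := by
        have h1 : |pi| * M' / 6 ≤ |pi| * M' / 6 + 1 := by linarith
        exact mul_le_mul_of_nonneg_right
          (mul_le_mul_of_nonneg_right h1 (sq_nonneg Δx)) hΔ.le
end

section
/- Let T₀ > 0, R > 0, and let φ_i = φ(x_i) for grid points x_i with uniform spacing. Define p_i = p₀·exp(-φ_i/(R·T₀)) (the exact isothermal hydrostatic pressure at grid points) and ψ_i - ψ_{i+1} = (φ_{i+1} - φ_i)/(R·T₀). Then p_{i+1}·exp(-ψ_{i+1}) = p_i·exp(-ψ_i) for all i, i.e., the discrete well-balance condition p_i·exp(-ψ_i) = const holds exactly. -/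
/-- For the isothermal ideal gas, the interpolated exact hydrostatic pressure
satisfies the discrete well-balance condition `pᵢ e^{-ψᵢ} = const`. -/
theorem isothermal_discrete_well_balance
    (R T₀ p₀ : ℝ) (hR : 0 < R) (hT₀ : 0 < T₀)
    (φ ψ p : ℤ → ℝ)
    (hp : ∀ i, p i = p₀ * Real.exp (-φ i / (R * T₀)))
    (hψ : ∀ i, ψ i - ψ (i + 1) = (φ (i + 1) - φ i) / (R * T₀)) :
    ∀ i : ℤ, p (i + 1) * Real.exp (-ψ (i + 1)) = p i * Real.exp (-ψ i) := by
  intro i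
  rw [hp, hp, mul_assoc, mul_assoc, ← Real.exp_add, ← Real.exp_add]
  congr 1
  have h := hψ i
  have hRT : R * T₀ ≠ 0 := by positivity
  field_simp at h ⊢
  rw [Real.exp_eq_exp, div_left_inj' hRT]
  linarith
end
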